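/- Let E: 0 → E^0 → E^1 → ... → E^n → 0 be a complex of graded free S-modules and let F be a graded free resolution of a finitely generated graded S-module M. Then ⟨F, E⟩ := Σ_j χ( F_{≥j} ⊗ H^j(E) ) ≥ 0, where χ denotes the alternating sum Σ_{k≥j} (−1)^{k−j} dim_K ( (F_k ⊗ H^j(E))_0 ) of dimensions of degree-0 components. -/

import Mathlib

open MvPolynomial Finset Module

noncomputable section

/-- The standard graded polynomial ring `S = K[x_1, …, x_n]`. -/
abbrev PolyS (K : Type) [Field K] (n : ℕ) : Type := MvPolynomial (Fin n) K

/-- The `K`-subspace of homogeneous polynomials of integer degree `z`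
(it is `0` if `z < 0`). -/
def homogZ (K : Type) [Field K] (n : ℕ) (z : ℤ) : Submodule K (PolyS K n) :=
  ⨆ (_ : 0 ≤ z), MvPolynomial.homogeneousSubmodule (Fin n) K z.toNat

/-- The degree-`ℓ` piece of the graded free module `⊕ₚ S(-dg p)`. -/
def freePiece {K : Type} [Field K] {n r : ℕ} (dg : Fin r → ℤ) (ℓ : ℤ) :
    Submodule K (Fin r → PolyS K n) :=
  Submodule.pi Set.univ fun p => homogZ K n (ℓ - dg p)

/-- A (homologically indexed) finite complex of graded free `S`-modules
`F₀ ← F₁ ← ⋯ ← F_len ← 0`, where `Fᵢ = ⊕ₚ S(-deg i p)` and the (degree `0`)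
map `Fᵢ₊₁ → Fᵢ` is given by the matrix `dd i`, whose entries are homogeneous
of the appropriate degrees. -/
structure FreeComplex (K : Type) [Field K] (n : ℕ) where
  len : ℕ
  rk : ℕ → ℕ
  deg : (i : ℕ) → Fin (rk i) → ℤ
  dd : (i : ℕ) → Matrix (Fin (rk i)) (Fin (rk (i+1))) (PolyS K n)
  rk_eq_zero : ∀ i, len < i → rk i = 0
  isHomog : ∀ i p q, dd i p q ∈ homogZ K n (deg (i+1) q - deg i p)
  isComplex : ∀ i, dd i * dd (i+1) = 0

variable {K : Type} [Field K] {n : ℕ}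

/-- `F` is exact in positive homological degrees; that is, it is a graded free
resolution of the finitely generated graded module `M = coker (F₁ → F₀)`. -/
def IsResolution (F : FreeComplex K n) : Prop :=
  ∀ i, LinearMap.ker ((F.dd i).mulVecLin) = LinearMap.range ((F.dd (i+1)).mulVecLin)

/-- The complex is minimal: entries of the differentials lie in the maximal ideal,
i.e. all (constant) entries between generators of equal degrees vanish. -/
def IsMinimal (F : FreeComplex K n) : Prop :=
  ∀ i p q, F.deg (i+1) q = F.deg i p → F.dd i p q = 0

/-- Betti number `β_{i,j}`: the number of generators of `Fᵢ` of degree `j`. -/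
def bettiNum (F : FreeComplex K n) (i : ℕ) (j : ℤ) : ℕ :=
  (Finset.univ.filter fun p => F.deg i p = j).card

/-- The dimension of the degree-`ℓ` piece of the module `M = coker (F₁ → F₀)`
resolved by `F`. -/
def MPieceDim (F : FreeComplex K n) (ℓ : ℤ) : ℕ :=
  finrank K ((freePiece (F.deg 0) ℓ) ⧸
    (Submodule.comap (freePiece (F.deg 0) ℓ).subtype
      ((LinearMap.range ((F.dd 0).mulVecLin)).restrictScalars K)))

/-- The Hilbert polynomial of the twisted free module `S(-a)` in `n` variables:
`binom (t - a + n - 1, n - 1)`. -/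
def genHilb (n : ℕ) (a : ℤ) : Polynomial ℚ :=
  if n = 0 then 0 else
    Polynomial.C (((n - 1).factorial : ℚ))⁻¹ *
      ∏ k ∈ Finset.range (n - 1),
        (Polynomial.X - Polynomial.C (a : ℚ) + Polynomial.C ((k : ℚ) + 1))

/-- The Hilbert polynomial of `M = coker (F₁ → F₀)`, computed from the free
resolution `F` by additivity. -/
def hilbPoly (F : FreeComplex K n) : Polynomial ℚ :=
  ∑ i ∈ Finset.range (F.len + 1),
    Polynomial.C ((-1 : ℚ) ^ i) * ∑ p : Fin (F.rk i), genHilb n (F.deg i p)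

/-- The Krull dimension of a module read off from its Hilbert polynomial:
`0` for the zero polynomial (finite length), `deg + 1` otherwise. -/
def polyDim (P : Polynomial ℚ) : ℕ := if P = 0 then 0 else P.natDegree + 1

/-- `M = coker (F₁ → F₀)` is a Cohen-Macaulay module of codimension `c`:
`F` is a minimal free resolution of length exactly `c` (so `pd M = c`, and by
Auslander–Buchsbaum `depth M = n - c`) and `dim M = n - c`. -/
def IsCMcodim (F : FreeComplex K n) (c : ℕ) : Prop :=
  IsResolution F ∧ IsMinimal F ∧ (∀ i, c < i → F.rk i = 0) ∧ F.rk c ≠ 0 ∧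
    polyDim (hilbPoly F) = n - c

/-- The multiplicity `e(M)` of a module of codimension `c`, computed from the
Betti numbers of a free resolution:
`e(M) = ((-1)^c / c!) ⬝ Σ_{i,j} (-1)^i β_{i,j} j^c`. -/
def multQ (F : FreeComplex K n) (c : ℕ) : ℚ :=
  ((-1 : ℚ) ^ c / c.factorial) *
    ∑ i ∈ Finset.range (F.len + 1),
      (-1 : ℚ) ^ i * ∑ p : Fin (F.rk i), ((F.deg i p : ℚ)) ^ c


/-- A (cohomologically indexed) finite complex of graded free `S`-modules
`0 → E⁰ → E¹ → ⋯ → E^len → 0`, where `Eⁱ = ⊕ₚ S(-deg i p)` and the (degree `0`)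
map `Eⁱ → Eⁱ⁺¹` is given by the matrix `dd i`. -/
structure CoComplex (K : Type) [Field K] (n : ℕ) where
  len : ℕ
  rk : ℕ → ℕ
  deg : (i : ℕ) → Fin (rk i) → ℤ
  dd : (i : ℕ) → Matrix (Fin (rk (i+1))) (Fin (rk i)) (PolyS K n)
  rk_eq_zero : ∀ i, len < i → rk i = 0
  isHomog : ∀ i p q, dd i p q ∈ homogZ K n (deg i q - deg (i+1) p)
  isComplex : ∀ i, dd (i+1) * dd i = 0

/-- The degree-`ℓ` part of the cocycles at cohomological position `i`. -/
def CoComplex.kerPiece (E : CoComplex K n) (i : ℕ) (ℓ : ℤ) :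
    Submodule K (Fin (E.rk i) → PolyS K n) :=
  ((LinearMap.ker ((E.dd i).mulVecLin)).restrictScalars K) ⊓ freePiece (E.deg i) ℓ

/-- The coboundaries at cohomological position `i` (as a `K`-subspace). -/
def CoComplex.imSub (E : CoComplex K n) : (i : ℕ) → Submodule K (Fin (E.rk i) → PolyS K n)
  | 0 => ⊥
  | (j+1) => (LinearMap.range ((E.dd j).mulVecLin)).restrictScalars K

/-- `dim_K (Hⁱ(E))_ℓ`, the dimension of the degree-`ℓ` component of the `i`-th
cohomology module of the complex `E`. -/
def cohomDim (E : CoComplex K n) (i : ℕ) (ℓ : ℤ) : ℕ :=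
  finrank K ((E.kerPiece i ℓ) ⧸
    (Submodule.comap (E.kerPiece i ℓ).subtype (E.imSub i)))

/-- The bilinear pairing `⟨F, E⟩ = Σ_{j ≤ i, k} (-1)^{i-j} β_{i,k}(F) ⬝ dim_K (H^j E)_{-k}`
of a free resolution `F` against a free cocomplex `E`. -/
def pairing (F : FreeComplex K n) (E : CoComplex K n) : ℤ :=
  ∑ i ∈ Finset.range (F.len + 1), ∑ j ∈ Finset.range (i + 1),
    (-1 : ℤ) ^ (i - j) * ∑ p : Fin (F.rk i), (cohomDim E j (-(F.deg i p)) : ℤ)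

/-- The modified pairing `⟨F, E⟩_{c,τ}`: terms with `j ≤ i` are kept when `j < τ`
or `j ≤ i - 2`, and the terms with `j = τ`, `i = τ + ε` (`ε ∈ {0,1}`) are kept
only when the degree `k` of the generator satisfies `k ≤ c + ε`. -/
def pairingMod (F : FreeComplex K n) (E : CoComplex K n) (c : ℤ) (τ : ℕ) : ℤ :=
  (∑ i ∈ Finset.range (F.len + 1), ∑ j ∈ Finset.range (i + 1),
    if j < τ ∨ j + 2 ≤ i then
      (-1 : ℤ) ^ (i - j) * ∑ p : Fin (F.rk i), (cohomDim E j (-(F.deg i p)) : ℤ)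
    else 0) +
  ∑ ε ∈ Finset.range 2,
    (-1 : ℤ) ^ ε * ∑ p ∈ Finset.univ.filter (fun p => F.deg (τ + ε) p ≤ c + ε),
      (cohomDim E τ (-(F.deg (τ + ε) p)) : ℤ)


/- ============ Auxiliary development ============ -/

section Aux

lemma homogZ_of_nonneg {z : ℤ} (h : 0 ≤ z) :
    homogZ K n z = MvPolynomial.homogeneousSubmodule (Fin n) K z.toNat := by
  simp [homogZ, iSup_pos h]

lemma homogZ_of_neg {z : ℤ} (h : z < 0) : homogZ K n z = ⊥ := by
  simp [homogZ, iSup_neg (not_le.2 h)]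

lemma homogZ_mul {a b : ℤ} {f g : PolyS K n} (hf : f ∈ homogZ K n a)
    (hg : g ∈ homogZ K n b) : f * g ∈ homogZ K n (a + b) := by
  rcases lt_or_ge a 0 with ha | ha
  · rw [homogZ_of_neg ha] at hf
    simp only [Submodule.mem_bot] at hf
    simp [hf, Submodule.zero_mem]
  rcases lt_or_ge b 0 with hb | hb
  · rw [homogZ_of_neg hb] at hg
    simp only [Submodule.mem_bot] at hg
    simp [hg, Submodule.zero_mem]
  rw [homogZ_of_nonneg ha] at hf
  rw [homogZ_of_nonneg hb] at hg
  rw [homogZ_of_nonneg (by omega)]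
  rw [mem_homogeneousSubmodule] at *
  have : (a + b).toNat = a.toNat + b.toNat := by omega
  rw [this]
  exact hf.mul hg

/-- projection onto the degree-`z` component. -/
def cproj (K : Type) [Field K] (n : ℕ) (z : ℤ) : PolyS K n →ₗ[K] PolyS K n :=
  if 0 ≤ z then MvPolynomial.homogeneousComponent z.toNat else 0

lemma cproj_mem (z : ℤ) (f : PolyS K n) : cproj K n z f ∈ homogZ K n z := by
  rcases le_or_gt 0 z with h | h
  · rw [homogZ_of_nonneg h, cproj, if_pos h]
    exact homogeneousComponent_mem _ _
  · rw [cproj, if_neg (not_le.2 h)]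
    simp

lemma cproj_of_mem {z : ℤ} {f : PolyS K n} (h : f ∈ homogZ K n z) :
    cproj K n z f = f := by
  rcases le_or_gt 0 z with hz | hz
  · rw [homogZ_of_nonneg hz] at h
    rw [cproj, if_pos hz, homogeneousComponent_of_mem h, if_pos rfl]
  · rw [homogZ_of_neg hz] at h
    simp only [Submodule.mem_bot] at h
    simp [h]

lemma homogComp_mul_left {d : ℕ} {f : PolyS K n} (hf : f.IsHomogeneous d)
    (m : ℕ) (g : PolyS K n) :
    homogeneousComponent m (f * g) =
      if d ≤ m then f * homogeneousComponent (m - d) g else 0 := by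
  conv_lhs => rw [← sum_homogeneousComponent g]
  rw [Finset.mul_sum, map_sum]
  have hterm : ∀ k, homogeneousComponent m (f * homogeneousComponent k g)
      = if m = d + k then f * homogeneousComponent k g else 0 := by
    intro k
    exact homogeneousComponent_of_mem
      ((mem_homogeneousSubmodule _ _).2 (hf.mul (homogeneousComponent_isHomogeneous k g)))
  simp_rw [hterm]
  rcases le_or_gt d m with hdm | hdm
  · rw [if_pos hdm]
    have : ∀ k, (m = d + k) ↔ (k = m - d) := by omega
    simp_rw [this]
    rw [Finset.sum_ite_eq' (Finset.range (g.totalDegree + 1)) (m - d)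
      (fun k => f * homogeneousComponent k g)]
    split_ifs with hmem
    · rfl
    · rw [Finset.mem_range, not_lt] at hmem
      rw [homogeneousComponent_eq_zero _ g (by omega), mul_zero]
  · rw [if_neg (not_le.2 hdm)]
    apply Finset.sum_eq_zero
    intro k _
    rw [if_neg (by omega)]

lemma cproj_mul_left {a : ℤ} {f : PolyS K n} (hf : f ∈ homogZ K n a) (b : ℤ)
    (g : PolyS K n) : cproj K n (a + b) (f * g) = f * cproj K n b g := by
  rcases lt_or_ge a 0 with ha | ha
  · rw [homogZ_of_neg ha] at hf
    simp only [Submodule.mem_bot] at hf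
    simp [hf]
  rw [homogZ_of_nonneg ha] at hf
  rw [mem_homogeneousSubmodule] at hf
  simp only [cproj]
  split_ifs with hab hb hb
  · rw [homogComp_mul_left hf, if_pos (by omega)]
    have h3 : (a+b).toNat - a.toNat = b.toNat := by omega
    rw [h3]
  · rw [homogComp_mul_left hf, if_neg (by omega)]
    simp
  · omega
  · simp

instance hsFD (d : ℕ) :
    FiniteDimensional K (MvPolynomial.homogeneousSubmodule (Fin n) K d) := by
  rw [homogeneousSubmodule_eq_finsupp_supported]
  have hfin : Set.Finite { d' : (Fin n →₀ ℕ) | d'.degree = d } := by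
    apply Set.Finite.subset (Set.finite_Iic (Finsupp.equivFunOnFinite.symm (fun _ => d)))
    intro x hx
    simp only [Set.mem_setOf_eq] at hx
    rw [Set.mem_Iic, Finsupp.le_iff]
    intro i _
    simpa [hx] using Finsupp.le_degree i x
  have : Finite { d' : (Fin n →₀ ℕ) | d'.degree = d } := hfin
  exact Module.Finite.equiv (AddMonoidAlgebra.supportedEquivFinsupp _).symm

instance homogZFD (z : ℤ) : FiniteDimensional K (homogZ K n z) := by
  rcases le_or_gt 0 z with h | h
  · rw [homogZ_of_nonneg h]; infer_instance
  · rw [homogZ_of_neg h]; infer_instance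

lemma mem_freePiece_iff {r : ℕ} {dg : Fin r → ℤ} {ℓ : ℤ} {x : Fin r → PolyS K n} :
    x ∈ freePiece dg ℓ ↔ ∀ p, x p ∈ homogZ K n (ℓ - dg p) := by
  constructor
  · exact fun h p => h p trivial
  · exact fun h p _ => h p

/-- linear equivalence between a pi submodule and the pi of the submodules -/
def subPiEquiv {ι : Type} [Fintype ι] {M : ι → Type} [∀ i, AddCommGroup (M i)]
    [∀ i, Module K (M i)] (P : (i : ι) → Submodule K (M i)) :
    (Submodule.pi Set.univ P) ≃ₗ[K] ((i : ι) → P i) where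
  toFun x i := ⟨x.1 i, x.2 i trivial⟩
  map_add' := by intros; rfl
  map_smul' := by intros; rfl
  invFun v := ⟨fun i => v i, fun i _ => (v i).2⟩
  left_inv x := by ext i; rfl
  right_inv v := by ext i; rfl

instance subPiFD {ι : Type} [Fintype ι] {M : ι → Type} [∀ i, AddCommGroup (M i)]
    [∀ i, Module K (M i)] (P : (i : ι) → Submodule K (M i))
    [∀ i, FiniteDimensional K (P i)] : FiniteDimensional K (Submodule.pi Set.univ P) :=
  Module.Finite.equiv (subPiEquiv P).symm

lemma finrank_subPi {ι : Type} [Fintype ι] {M : ι → Type} [∀ i, AddCommGroup (M i)]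
    [∀ i, Module K (M i)] (P : (i : ι) → Submodule K (M i))
    [∀ i, FiniteDimensional K (P i)] :
    finrank K (Submodule.pi Set.univ P) = ∑ i, finrank K (P i) := by
  rw [LinearEquiv.finrank_eq (subPiEquiv P), finrank_pi_fintype]

instance freePieceFD {r : ℕ} (dg : Fin r → ℤ) (ℓ : ℤ) :
    FiniteDimensional K (freePiece (K := K) (n := n) dg ℓ) :=
  inferInstanceAs (FiniteDimensional K (Submodule.pi Set.univ fun p => homogZ K n (ℓ - dg p)))

lemma finrank_comap_subtype {M : Type} [AddCommGroup M] [Module K M]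
    (P Q : Submodule K M) [FiniteDimensional K P] :
    finrank K (Submodule.comap P.subtype Q) = finrank K (Q ⊓ P : Submodule K M) := by
  have h1 : Submodule.comap P.subtype Q = Submodule.comap P.subtype (Q ⊓ P) := by
    ext x; simp [x.2]
  rw [h1]
  exact LinearEquiv.finrank_eq (Submodule.comapSubtypeEquivOfLe inf_le_right)

lemma finrank_map_add_inf_ker {M M' : Type} [AddCommGroup M] [Module K M]
    [AddCommGroup M'] [Module K M'] (f : M →ₗ[K] M') (P : Submodule K M)
    [FiniteDimensional K P] :
    finrank K (Submodule.map f P) + finrank K (LinearMap.ker f ⊓ P : Submodule K M)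
      = finrank K P := by
  have h1 : Submodule.map f P = LinearMap.range (f.comp P.subtype) := by
    rw [LinearMap.range_comp, Submodule.range_subtype]
  have h2 : LinearMap.ker (f.comp P.subtype) = Submodule.comap P.subtype (LinearMap.ker f) := by
    rw [LinearMap.ker_comp]
  rw [h1, ← LinearMap.finrank_range_add_finrank_ker (f.comp P.subtype), h2,
    finrank_comap_subtype]

lemma core_map_eq {r r' : ℕ} (A : Matrix (Fin r) (Fin r') (PolyS K n))
    (d : Fin r → ℤ) (d' : Fin r' → ℤ)
    (hA : ∀ p q, A p q ∈ homogZ K n (d' q - d p)) (ℓ : ℤ) :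
    Submodule.map (A.mulVecLin.restrictScalars K) (freePiece d' ℓ)
      = (LinearMap.range A.mulVecLin).restrictScalars K ⊓ freePiece d ℓ := by
  apply le_antisymm
  · rintro x hx
    rw [Submodule.mem_map] at hx
    obtain ⟨y, hy, rfl⟩ := hx
    rw [mem_freePiece_iff] at hy
    rw [Submodule.mem_inf]
    refine ⟨⟨y, rfl⟩, ?_⟩
    rw [mem_freePiece_iff]
    intro p
    show A.mulVec y p ∈ _
    rw [Matrix.mulVec, dotProduct]
    apply Submodule.sum_mem
    intro q _
    have h := homogZ_mul (hA p q) (hy q)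
    have he : d' q - d p + (ℓ - d' q) = ℓ - d p := by ring
    rwa [he] at h
  · intro x hmem
    rw [Submodule.mem_inf] at hmem
    obtain ⟨hr, hx⟩ := hmem
    rw [Submodule.restrictScalars_mem, LinearMap.mem_range] at hr
    obtain ⟨y, hy⟩ := hr
    rw [mem_freePiece_iff] at hx
    rw [Submodule.mem_map]
    refine ⟨fun q => cproj K n (ℓ - d' q) (y q), ?_, ?_⟩
    · rw [mem_freePiece_iff]
      intro q
      exact cproj_mem _ _
    · show A.mulVec _ = x
      funext p
      have h1 : A.mulVec (fun q => cproj K n (ℓ - d' q) (y q)) p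
          = ∑ q, cproj K n (ℓ - d p) (A p q * y q) := by
        rw [Matrix.mulVec, dotProduct]
        apply Finset.sum_congr rfl
        intro q _
        have h := cproj_mul_left (hA p q) (ℓ - d' q) (y q)
        have he : d' q - d p + (ℓ - d' q) = ℓ - d p := by ring
        rw [he] at h
        exact h.symm
      have h2 : ∑ q, A p q * y q = A.mulVec y p := by
        rw [Matrix.mulVec, dotProduct]
      have hy' : A.mulVec y = x := hy
      rw [h1, ← map_sum, h2, hy']
      exact cproj_of_mem (hx p)

end Aux

section ESide

lemma imSub_le_kerRS (E : CoComplex K n) (j : ℕ) :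
    E.imSub j ≤ (LinearMap.ker ((E.dd j).mulVecLin)).restrictScalars K := by
  cases j with
  | zero => simp [CoComplex.imSub]
  | succ m =>
    rintro x hx
    obtain ⟨y, rfl⟩ := hx
    show (E.dd (m+1)).mulVec ((E.dd m).mulVec y) = 0
    rw [Matrix.mulVec_mulVec, E.isComplex m, Matrix.zero_mulVec]

instance kerPieceFD (E : CoComplex K n) (j : ℕ) (ℓ : ℤ) :
    FiniteDimensional K (E.kerPiece j ℓ) :=
  Submodule.finiteDimensional_of_le (inf_le_right : _ ≤ freePiece (E.deg j) ℓ)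

lemma cohomDim_add (E : CoComplex K n) (j : ℕ) (ℓ : ℤ) :
    cohomDim E j ℓ
      + finrank K (E.imSub j ⊓ freePiece (E.deg j) ℓ : Submodule K _)
      = finrank K (E.kerPiece j ℓ) := by
  have h := Submodule.finrank_quotient_add_finrank
    (Submodule.comap (E.kerPiece j ℓ).subtype (E.imSub j))
  rw [finrank_comap_subtype] at h
  have h2 : E.imSub j ⊓ E.kerPiece j ℓ = E.imSub j ⊓ freePiece (E.deg j) ℓ := by
    rw [CoComplex.kerPiece, ← inf_assoc, inf_eq_left.2 (imSub_le_kerRS E j)]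
  rw [h2] at h
  exact h

lemma Edim_split (E : CoComplex K n) (j : ℕ) (ℓ : ℤ) :
    finrank K (freePiece (K := K) (n := n) (E.deg j) ℓ)
      = finrank K (E.imSub (j+1) ⊓ freePiece (E.deg (j+1)) ℓ : Submodule K _)
        + finrank K (E.kerPiece j ℓ) := by
  have h := finrank_map_add_inf_ker ((E.dd j).mulVecLin.restrictScalars K)
    (freePiece (E.deg j) ℓ)
  rw [core_map_eq (E.dd j) (E.deg (j+1)) (E.deg j) (fun p q => E.isHomog j p q) ℓ] at h
  rw [LinearMap.ker_restrictScalars] at h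
  rw [← h]
  rfl

lemma cohomDim_int (E : CoComplex K n) (j : ℕ) (ℓ : ℤ) :
    (cohomDim E j ℓ : ℤ)
      = (finrank K (freePiece (K := K) (n := n) (E.deg j) ℓ) : ℤ)
        - (finrank K (E.imSub (j+1) ⊓ freePiece (E.deg (j+1)) ℓ : Submodule K _) : ℤ)
        - (finrank K (E.imSub j ⊓ freePiece (E.deg j) ℓ : Submodule K _) : ℤ) := by
  have h1 := cohomDim_add E j ℓ
  have h2 := Edim_split E j ℓ
  omega

end ESide

section DoubleComplex

variable (F : FreeComplex K n) (E : CoComplex K n)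

/-- degree-0 part of `F_i ⊗ E^j` inside the matrix space. -/
def Xsp (i j : ℕ) : Submodule K (Fin (F.rk i) → Fin (E.rk j) → PolyS K n) :=
  Submodule.pi Set.univ fun p => freePiece (E.deg j) (-(F.deg i p))

/-- the vertical map, induced by the differential of `E`. -/
def Vmap (i j : ℕ) :
    (Fin (F.rk i) → Fin (E.rk j) → PolyS K n) →ₗ[K]
      (Fin (F.rk i) → Fin (E.rk (j+1)) → PolyS K n) :=
  LinearMap.compLeft ((E.dd j).mulVecLin.restrictScalars K) (Fin (F.rk i))

/-- the horizontal map, induced by the differential of `F`. -/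
def Hmap (i j : ℕ) :
    (Fin (F.rk (i+1)) → Fin (E.rk j) → PolyS K n) →ₗ[K]
      (Fin (F.rk i) → Fin (E.rk j) → PolyS K n) where
  toFun u := fun p q => ∑ p', F.dd i p p' * u p' q
  map_add' u v := by
    funext p q
    simp only [Pi.add_apply, mul_add]
    rw [Finset.sum_add_distrib]
  map_smul' c u := by
    funext p q
    simp only [Pi.smul_apply, RingHom.id_apply]
    rw [Finset.smul_sum]
    apply Finset.sum_congr rfl
    intro p' _
    rw [Algebra.mul_smul_comm]

lemma Hmap_apply (i j : ℕ) (u : Fin (F.rk (i+1)) → Fin (E.rk j) → PolyS K n)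
    (p : Fin (F.rk i)) (q : Fin (E.rk j)) :
    Hmap F E i j u p q = ∑ p', F.dd i p p' * u p' q := rfl

lemma Vmap_apply (i j : ℕ) (u : Fin (F.rk i) → Fin (E.rk j) → PolyS K n)
    (p : Fin (F.rk i)) :
    Vmap F E i j u p = (E.dd j).mulVec (u p) := rfl

lemma mem_Xsp_iff {i j : ℕ} {u : Fin (F.rk i) → Fin (E.rk j) → PolyS K n} :
    u ∈ Xsp F E i j ↔ ∀ p q, u p q ∈ homogZ K n (-(F.deg i p) - E.deg j q) := by
  constructor
  · intro h p q
    exact (mem_freePiece_iff.1 (h p trivial)) q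
  · intro h
    rw [Xsp, Submodule.mem_pi]
    intro p _
    rw [mem_freePiece_iff]
    exact h p

instance XspFD (i j : ℕ) : FiniteDimensional K (Xsp F E i j) :=
  inferInstanceAs (FiniteDimensional K
    (Submodule.pi Set.univ fun p => freePiece (E.deg j) (-(F.deg i p))))

/-- the image of the horizontal map -/
def Asp (i j : ℕ) : Submodule K (Fin (F.rk i) → Fin (E.rk j) → PolyS K n) :=
  Submodule.map (Hmap F E i j) (Xsp F E (i+1) j)

lemma Asp_le_Xsp (i j : ℕ) : Asp F E i j ≤ Xsp F E i j := by
  rintro x hx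
  rw [Asp, Submodule.mem_map] at hx
  obtain ⟨u, hu, rfl⟩ := hx
  rw [mem_Xsp_iff] at hu ⊢
  intro p q
  rw [Hmap_apply]
  apply Submodule.sum_mem
  intro p' _
  have h := homogZ_mul (F.isHomog i p p') (hu p' q)
  have he : F.deg (i+1) p' - F.deg i p + (-(F.deg (i+1) p') - E.deg j q)
      = -(F.deg i p) - E.deg j q := by ring
  rwa [he] at h

lemma Vmap_maps_Xsp {i j : ℕ} {u : Fin (F.rk i) → Fin (E.rk j) → PolyS K n}
    (hu : u ∈ Xsp F E i j) : Vmap F E i j u ∈ Xsp F E i (j+1) := by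
  intro p _
  have h : u p ∈ freePiece (E.deg j) (-(F.deg i p)) := hu p trivial
  have hm : Vmap F E i j u p ∈ Submodule.map ((E.dd j).mulVecLin.restrictScalars K)
      (freePiece (E.deg j) (-(F.deg i p))) := ⟨u p, h, rfl⟩
  rw [core_map_eq (E.dd j) (E.deg (j+1)) (E.deg j) (fun p' q' => E.isHomog j p' q')] at hm
  exact hm.2

instance AspFD (i j : ℕ) : FiniteDimensional K (Asp F E i j) :=
  Submodule.finiteDimensional_of_le (Asp_le_Xsp F E i j)

lemma HH_eq_zero (i j : ℕ) (u : Fin (F.rk (i+2)) → Fin (E.rk j) → PolyS K n) :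
    Hmap F E i j (Hmap F E (i+1) j u) = 0 := by
  funext p q
  show ∑ p', F.dd i p p' * ∑ p'', F.dd (i+1) p' p'' * u p'' q = 0
  have h1 : ∀ p', F.dd i p p' * ∑ p'', F.dd (i+1) p' p'' * u p'' q
      = ∑ p'', F.dd i p p' * F.dd (i+1) p' p'' * u p'' q := by
    intro p'
    rw [Finset.mul_sum]
    apply Finset.sum_congr rfl
    intro p'' _
    ring
  simp_rw [h1]
  rw [Finset.sum_comm]
  have h2 : ∀ p'', ∑ p', F.dd i p p' * F.dd (i+1) p' p'' * u p'' q
      = ((F.dd i * F.dd (i+1)) p p'') * u p'' q := by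
    intro p''
    rw [Matrix.mul_apply, Finset.sum_mul]
  simp_rw [h2, F.isComplex i]
  simp

lemma VV_eq_zero (i j : ℕ) (u : Fin (F.rk i) → Fin (E.rk j) → PolyS K n) :
    Vmap F E i (j+1) (Vmap F E i j u) = 0 := by
  funext p q
  show ((E.dd (j+1)).mulVec ((E.dd j).mulVec (u p))) q = 0
  rw [Matrix.mulVec_mulVec, E.isComplex j, Matrix.zero_mulVec]
  rfl

lemma HV_comm (i j : ℕ) :
    (Vmap F E i j).comp (Hmap F E i j) = (Hmap F E i (j+1)).comp (Vmap F E (i+1) j) := by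
  apply LinearMap.ext
  intro u
  funext p q'
  show (E.dd j).mulVec (fun q => ∑ p', F.dd i p p' * u p' q) q'
    = ∑ p', F.dd i p p' * (E.dd j).mulVec (u p') q'
  rw [Matrix.mulVec, dotProduct]
  have h1 : ∀ q, E.dd j q' q * ∑ p', F.dd i p p' * u p' q
      = ∑ p', F.dd i p p' * (E.dd j q' q * u p' q) := by
    intro q
    rw [Finset.mul_sum]
    apply Finset.sum_congr rfl
    intro p' _
    ring
  simp_rw [h1]
  rw [Finset.sum_comm]
  apply Finset.sum_congr rfl
  intro p' _
  rw [Matrix.mulVec, dotProduct, Finset.mul_sum]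

lemma row_exact (hF : IsResolution F) (i j : ℕ) :
    LinearMap.ker (Hmap F E i j) ⊓ Xsp F E (i+1) j = Asp F E (i+1) j := by
  apply le_antisymm
  · intro u hu
    rw [Submodule.mem_inf] at hu
    obtain ⟨hk, hx⟩ := hu
    rw [LinearMap.mem_ker] at hk
    rw [mem_Xsp_iff] at hx
    have hcol : ∀ q, ∃ w, w ∈ freePiece (F.deg (i+2)) (-(E.deg j q)) ∧
        (F.dd (i+1)).mulVec w = fun p => u p q := by
      intro q
      have hker : (fun p => u p q) ∈ LinearMap.ker ((F.dd i).mulVecLin) := by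
        rw [LinearMap.mem_ker]
        funext p
        show ∑ p', F.dd i p p' * u p' q = 0
        have := congrFun (congrFun hk p) q
        rw [Hmap_apply] at this
        exact this
      rw [hF i] at hker
      have hpc : (fun p => u p q) ∈ freePiece (F.deg (i+1)) (-(E.deg j q)) := by
        rw [mem_freePiece_iff]
        intro p
        have h := hx p q
        have he : -(F.deg (i+1) p) - E.deg j q = -(E.deg j q) - F.deg (i+1) p := by ring
        rwa [he] at h
      have hmem : (fun p => u p q) ∈ Submodule.map
          ((F.dd (i+1)).mulVecLin.restrictScalars K)
          (freePiece (F.deg (i+2)) (-(E.deg j q))) := by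
        rw [core_map_eq (F.dd (i+1)) (F.deg (i+1)) (F.deg (i+2))
          (fun p' q' => F.isHomog (i+1) p' q')]
        exact Submodule.mem_inf.2 ⟨hker, hpc⟩
      obtain ⟨w, hw1, hw2⟩ := hmem
      exact ⟨w, hw1, hw2⟩
    choose w hw1 hw2 using hcol
    refine Submodule.mem_map.2 ⟨fun p'' q => w q p'', ?_, ?_⟩
    · rw [mem_Xsp_iff]
      intro p'' q
      have h := (mem_freePiece_iff.1 (hw1 q)) p''
      have he : -(E.deg j q) - F.deg (i+2) p'' = -(F.deg (i+2) p'') - E.deg j q := by ring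
      rwa [he] at h
    · funext p q
      rw [Hmap_apply]
      have := congrFun (hw2 q) p
      exact this
  · rintro x hx
    rw [Asp, Submodule.mem_map] at hx
    obtain ⟨u, hu, rfl⟩ := hx
    rw [Submodule.mem_inf]
    constructor
    · rw [LinearMap.mem_ker]
      exact HH_eq_zero F E i j u
    · exact Asp_le_Xsp F E (i+1) j ⟨u, hu, rfl⟩

lemma map_compLeft_pi {ι : Type} [Fintype ι] [DecidableEq ι] {M M' : Type}
    [AddCommGroup M] [Module K M] [AddCommGroup M'] [Module K M']
    (f : M →ₗ[K] M') (P : ι → Submodule K M) :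
    Submodule.map (f.compLeft ι) (Submodule.pi Set.univ P)
      = Submodule.pi Set.univ (fun i => Submodule.map f (P i)) := by
  apply le_antisymm
  · rintro x hx
    rw [Submodule.mem_map] at hx
    obtain ⟨u, hu, rfl⟩ := hx
    intro i _
    exact ⟨u i, hu i trivial, rfl⟩
  · intro v hv
    have : ∀ i, ∃ u, u ∈ P i ∧ f u = v i := by
      intro i
      obtain ⟨u, hu, hfu⟩ := hv i trivial
      exact ⟨u, hu, hfu⟩
    choose u hu hfu using this
    refine ⟨u, fun i _ => hu i, ?_⟩
    funext i
    exact hfu i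

lemma Vmap_map_Xsp (i j : ℕ) :
    Submodule.map (Vmap F E i j) (Xsp F E i j)
      = Submodule.pi Set.univ (fun p =>
          (E.imSub (j+1) ⊓ freePiece (E.deg (j+1)) (-(F.deg i p)) : Submodule K _)) := by
  rw [Vmap, Xsp, map_compLeft_pi]
  congr 1
  funext p
  rw [core_map_eq (E.dd j) (E.deg (j+1)) (E.deg j) (fun p' q' => E.isHomog j p' q')]
  rfl

end DoubleComplex

section Counting

variable (F : FreeComplex K n) (E : CoComplex K n)

instance imSubPieceFD (j : ℕ) (ℓ : ℤ) :
    FiniteDimensional K (E.imSub j ⊓ freePiece (E.deg j) ℓ : Submodule K _) :=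
  Submodule.finiteDimensional_of_le inf_le_right

/-- `dim_K (F_i ⊗ E^j)_0` -/
def xd (i j : ℕ) : ℕ := finrank K (Xsp F E i j)

/-- `dim_K` of the image of the horizontal map -/
def ad (i j : ℕ) : ℕ := finrank K (Asp F E i j)

def kvd (j : ℕ) : ℕ :=
  finrank K (LinearMap.ker (Vmap F E j j) ⊓ Xsp F E j j : Submodule K _)

def gd (j : ℕ) : ℕ :=
  finrank K (LinearMap.ker (Vmap F E j j) ⊓ Asp F E j j : Submodule K _)

def vd (j : ℕ) : ℕ := finrank K (Submodule.map (Vmap F E j j) (Xsp F E j j))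

def Csp (j : ℕ) : Submodule K (Fin (F.rk (j+1)) → Fin (E.rk (j+1)) → PolyS K n) :=
  Submodule.map (Vmap F E (j+1) j) (Xsp F E (j+1) j)

lemma xd_eq_sum (i j : ℕ) :
    xd F E i j = ∑ p, finrank K (freePiece (K := K) (n := n) (E.deg j) (-(F.deg i p))) := by
  rw [xd, Xsp, finrank_subPi]

lemma rank_nullity_H (hF : IsResolution F) (i j : ℕ) :
    ad F E i j + ad F E (i+1) j = xd F E (i+1) j := by
  have h := finrank_map_add_inf_ker (Hmap F E i j) (Xsp F E (i+1) j)
  rw [row_exact F E hF i j] at h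
  exact h

lemma rank_nullity_V (j : ℕ) : vd F E j + kvd F E j = xd F E j j :=
  finrank_map_add_inf_ker (Vmap F E j j) (Xsp F E j j)

lemma vd_eq_sum (j : ℕ) :
    vd F E j = ∑ p, finrank K
      (E.imSub (j+1) ⊓ freePiece (E.deg (j+1)) (-(F.deg j p)) : Submodule K _) := by
  rw [vd, Vmap_map_Xsp, finrank_subPi]

lemma xd_top (j : ℕ) : xd F E (F.len + 1) j = 0 := by
  have h0 : F.rk (F.len + 1) = 0 := F.rk_eq_zero _ (by omega)
  have : IsEmpty (Fin (F.rk (F.len+1))) := by rw [h0]; infer_instance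
  rw [xd_eq_sum]
  simp

lemma ad_top (hF : IsResolution F) (j : ℕ) : ad F E F.len j = 0 := by
  have h := rank_nullity_H F E hF F.len j
  rw [xd_top] at h
  omega

lemma gd_le_kvd (j : ℕ) : gd F E j ≤ kvd F E j :=
  Submodule.finrank_mono (inf_le_inf_left _ (Asp_le_Xsp F E j j))

lemma kvd_top : kvd F E (F.len + 1) = 0 := by
  have h : kvd F E (F.len+1) ≤ xd F E (F.len+1) (F.len+1) :=
    Submodule.finrank_mono inf_le_right
  rw [xd_top] at h
  omega

lemma gd_top : gd F E (F.len + 1) = 0 := by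
  have h := gd_le_kvd F E (F.len+1)
  rw [kvd_top] at h
  omega

lemma Csp_le_Xsp (j : ℕ) : Csp F E j ≤ Xsp F E (j+1) (j+1) := by
  rintro x hx
  obtain ⟨u, hu, rfl⟩ := hx
  exact Vmap_maps_Xsp F E hu

instance CspFD (j : ℕ) : FiniteDimensional K (Csp F E j) :=
  Submodule.finiteDimensional_of_le (Csp_le_Xsp F E j)

lemma Csp_le_kerV (j : ℕ) : Csp F E j ≤ LinearMap.ker (Vmap F E (j+1) (j+1)) := by
  rintro x hx
  obtain ⟨u, hu, rfl⟩ := hx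
  rw [LinearMap.mem_ker]
  exact VV_eq_zero F E (j+1) j u

/-- the key estimate coming from the staircase of the double complex -/
lemma key_estimate (hF : IsResolution F) (j : ℕ) :
    (ad F E j j : ℤ) ≤ (gd F E j : ℤ) + (kvd F E (j+1) : ℤ) - (gd F E (j+1) : ℤ) := by
  -- rank-nullity for V on A_{jj}
  have h1 : finrank K (Submodule.map (Vmap F E j j) (Asp F E j j)) + gd F E j
      = ad F E j j := by
    have h := finrank_map_add_inf_ker (Vmap F E j j) (Asp F E j j)
    rw [gd, ad]
    exact h
  -- commutation
  have h2 : Submodule.map (Vmap F E j j) (Asp F E j j)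
      = Submodule.map (Hmap F E j (j+1)) (Csp F E j) := by
    rw [Asp, Csp, ← Submodule.map_comp, ← Submodule.map_comp, HV_comm]
  -- rank-nullity for H on C_j
  have h3 : finrank K (Submodule.map (Hmap F E j (j+1)) (Csp F E j))
      + finrank K (LinearMap.ker (Hmap F E j (j+1)) ⊓ Csp F E j : Submodule K _)
      = finrank K (Csp F E j) :=
    finrank_map_add_inf_ker (Hmap F E j (j+1)) (Csp F E j)
  -- identification of the kernel part
  have h4 : LinearMap.ker (Hmap F E j (j+1)) ⊓ Csp F E j
      = (LinearMap.ker (Vmap F E (j+1) (j+1)) ⊓ Asp F E (j+1) (j+1)) ⊓ Csp F E j := by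
    have hrow := row_exact F E hF j (j+1)
    have e1 : LinearMap.ker (Hmap F E j (j+1)) ⊓ Csp F E j
        = (LinearMap.ker (Hmap F E j (j+1)) ⊓ Xsp F E (j+1) (j+1)) ⊓ Csp F E j := by
      rw [inf_assoc, inf_eq_right.2 (Csp_le_Xsp F E j)]
    rw [e1, hrow]
    ext x
    simp only [Submodule.mem_inf]
    constructor
    · rintro ⟨ha, hc⟩
      exact ⟨⟨Csp_le_kerV F E j hc, ha⟩, hc⟩
    · rintro ⟨⟨_, ha⟩, hc⟩
      exact ⟨ha, hc⟩
  -- dimension formula for the sup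
  have h5 : finrank K ((LinearMap.ker (Vmap F E (j+1) (j+1)) ⊓ Asp F E (j+1) (j+1))
        ⊔ Csp F E j : Submodule K _)
      + finrank K ((LinearMap.ker (Vmap F E (j+1) (j+1)) ⊓ Asp F E (j+1) (j+1))
        ⊓ Csp F E j : Submodule K _)
      = gd F E (j+1) + finrank K (Csp F E j) :=
    Submodule.finrank_sup_add_finrank_inf_eq _ _
  have h6 : finrank K ((LinearMap.ker (Vmap F E (j+1) (j+1)) ⊓ Asp F E (j+1) (j+1))
        ⊔ Csp F E j : Submodule K _) ≤ kvd F E (j+1) := by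
    apply Submodule.finrank_mono
    apply sup_le
    · exact inf_le_inf_left _ (Asp_le_Xsp F E (j+1) (j+1))
    · exact le_inf (Csp_le_kerV F E j) (Csp_le_Xsp F E j)
  rw [h2] at h1
  rw [h4] at h3
  omega

end Counting

section Combinatorics

lemma telescope1 (a b : ℕ → ℤ) (h : ∀ t, b (t+1) = a t + a (t+1)) (m : ℕ) :
    ∑ t ∈ Finset.range (m+1), (-1 : ℤ)^t * b t = b 0 - a 0 + (-1)^m * a m := by
  induction m with
  | zero => simp
  | succ m ih =>
    rw [Finset.sum_range_succ, ih, h m]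
    ring

variable (F : FreeComplex K n) (E : CoComplex K n)

/-- `Σ_p dim (B^j)_{-deg_i p}` -/
def DI (j i : ℕ) : ℤ :=
  ∑ p : Fin (F.rk i),
    (finrank K (E.imSub j ⊓ freePiece (E.deg j) (-(F.deg i p)) : Submodule K _) : ℤ)

def psB (j : ℕ) : ℤ := ∑ i ∈ Finset.Ico j (F.len+1), (-1:ℤ)^(i-j) * DI F E j i

def phB (j : ℕ) : ℤ := ∑ i ∈ Finset.Ico j (F.len+1), (-1:ℤ)^(i-j) * DI F E (j+1) i

def chB (j : ℕ) : ℤ := ∑ i ∈ Finset.Ico j (F.len+1), (-1:ℤ)^(i-j) * (xd F E i j : ℤ)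

lemma inner_sum_eq (i j : ℕ) :
    (∑ p : Fin (F.rk i), (cohomDim E j (-(F.deg i p)) : ℤ))
      = (xd F E i j : ℤ) - DI F E (j+1) i - DI F E j i := by
  have h1 : (∑ p : Fin (F.rk i), (cohomDim E j (-(F.deg i p)) : ℤ))
      = ∑ p : Fin (F.rk i),
        ((finrank K (freePiece (K := K) (n := n) (E.deg j) (-(F.deg i p))) : ℤ)
          - (finrank K (E.imSub (j+1) ⊓ freePiece (E.deg (j+1)) (-(F.deg i p)) :
              Submodule K _) : ℤ)
          - (finrank K (E.imSub j ⊓ freePiece (E.deg j) (-(F.deg i p)) :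
              Submodule K _) : ℤ)) :=
    Finset.sum_congr rfl (fun p _ => cohomDim_int E j (-(F.deg i p)))
  rw [h1, Finset.sum_sub_distrib, Finset.sum_sub_distrib, DI, DI]
  congr 2
  rw [xd_eq_sum]
  push_cast
  rfl

lemma DI_zero (i : ℕ) : DI F E 0 i = 0 := by
  rw [DI]
  apply Finset.sum_eq_zero
  intro p _
  simp [CoComplex.imSub]
  exact Nat.le_zero.1 ((Submodule.finrank_mono inf_le_left).trans (by simp))

lemma psB_zero : psB F E 0 = 0 := by
  rw [psB]
  apply Finset.sum_eq_zero
  intro i _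
  rw [DI_zero, mul_zero]

lemma psB_top : psB F E (F.len+1) = 0 := by
  rw [psB, Finset.Ico_self, Finset.sum_empty]

lemma phB_eq {j : ℕ} (hj : j ≤ F.len) :
    phB F E j = DI F E (j+1) j - psB F E (j+1) := by
  rw [phB, Finset.sum_eq_sum_Ico_succ_bot (show j < F.len+1 by omega)]
  have h0 : (-1:ℤ)^(j-j) = 1 := by rw [Nat.sub_self, pow_zero]
  rw [h0, one_mul]
  have h1 : ∀ i ∈ Finset.Ico (j+1) (F.len+1),
      (-1:ℤ)^(i-j) * DI F E (j+1) i = -((-1:ℤ)^(i-(j+1)) * DI F E (j+1) i) := by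
    intro i hi
    rw [Finset.mem_Ico] at hi
    have : i - j = (i - (j+1)) + 1 := by omega
    rw [this, pow_succ]
    ring
  rw [Finset.sum_congr rfl h1, psB]
  rw [Finset.sum_neg_distrib]
  ring

lemma DI_succ_eq_vd (j : ℕ) : DI F E (j+1) j = (vd F E j : ℤ) := by
  rw [vd_eq_sum]
  push_cast
  rfl

lemma chB_eq (hF : IsResolution F) {j : ℕ} (hj : j ≤ F.len) :
    chB F E j = (xd F E j j : ℤ) - (ad F E j j : ℤ) := by
  rw [chB, Finset.sum_Ico_eq_sum_range]
  have hr : F.len + 1 - j = (F.len - j) + 1 := by omega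
  rw [hr]
  have hsimp : ∀ t ∈ Finset.range ((F.len - j) + 1),
      (-1:ℤ)^((j+t)-j) * (xd F E (j+t) j : ℤ)
        = (-1:ℤ)^t * (xd F E (j+t) j : ℤ) := by
    intro t _
    have : j + t - j = t := by omega
    rw [this]
  rw [Finset.sum_congr rfl hsimp]
  have hrec : ∀ t, (fun t => (xd F E (j+t) j : ℤ)) (t+1)
      = (fun t => (ad F E (j+t) j : ℤ)) t + (fun t => (ad F E (j+t) j : ℤ)) (t+1) := by
    intro t
    simp only
    have e : j + (t+1) = (j+t)+1 := by omega
    rw [e]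
    exact_mod_cast (rank_nullity_H F E hF (j+t) j).symm
  have htel : ∑ t ∈ Finset.range ((F.len - j) + 1), (-1:ℤ)^t * (xd F E (j+t) j : ℤ)
      = (xd F E j j : ℤ) - (ad F E j j : ℤ)
        + (-1:ℤ)^(F.len - j) * (ad F E (j + (F.len - j)) j : ℤ) :=
    telescope1 (fun t => (ad F E (j+t) j : ℤ)) (fun t => (xd F E (j+t) j : ℤ))
      hrec (F.len - j)
  rw [htel]
  have e2 : j + (F.len - j) = F.len := by omega
  rw [e2, ad_top F E hF j]
  push_cast
  ring

end Combinatorics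

/-- If `E : 0 → E⁰ → ⋯ → Eⁿ → 0` is a complex of graded free
`S`-modules and `F` is a graded free resolution of a finitely generated graded
`S`-module `M` (namely of `M = coker (F₁ → F₀)`), then
`⟨F, E⟩ = Σ_j χ(F_{≥j} ⊗ H^j(E)) = Σ_{j≤i,k} (-1)^{i-j} β_{i,k}(F) dim_K (H^j E)_{-k} ≥ 0`. -/
theorem pairing_nonneg (K : Type) [Field K] (n : ℕ)
    (F : FreeComplex K n) (hF : IsResolution F)
    (E : CoComplex K n) (hE : E.len ≤ n) :
    0 ≤ pairing F E := by
  classical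
  unfold pairing
  have step1 : ∑ i ∈ Finset.range (F.len + 1), ∑ j ∈ Finset.range (i + 1),
      (-1 : ℤ) ^ (i - j) * ∑ p : Fin (F.rk i), (cohomDim E j (-(F.deg i p)) : ℤ)
      = ∑ i ∈ Finset.range (F.len + 1), ∑ j ∈ Finset.range (i + 1),
        (-1 : ℤ) ^ (i - j) * ((xd F E i j : ℤ) - DI F E (j+1) i - DI F E j i) := by
    apply Finset.sum_congr rfl
    intro i _
    apply Finset.sum_congr rfl
    intro j _
    rw [inner_sum_eq]
  rw [step1]
  simp_rw [Finset.range_eq_Ico]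
  have goal_eq : (∑ i ∈ Finset.Ico 0 (F.len+1), ∑ j ∈ Finset.Ico 0 (i+1),
      (-1 : ℤ) ^ (i - j) * ((xd F E i j : ℤ) - DI F E (j+1) i - DI F E j i))
      = ∑ j ∈ Finset.Ico 0 (F.len+1), ∑ i ∈ Finset.Ico j (F.len+1),
        (-1 : ℤ) ^ (i - j) * ((xd F E i j : ℤ) - DI F E (j+1) i - DI F E j i) :=
    (Finset.sum_Ico_Ico_comm 0 (F.len+1) _).symm
  rw [goal_eq]
  have step3 : ∀ j ∈ Finset.Ico 0 (F.len+1),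
      (∑ i ∈ Finset.Ico j (F.len+1),
        (-1 : ℤ) ^ (i - j) * ((xd F E i j : ℤ) - DI F E (j+1) i - DI F E j i))
      = ((kvd F E j : ℤ) - (ad F E j j : ℤ)) + (psB F E (j+1) - psB F E j) := by
    intro j hj
    rw [Finset.mem_Ico] at hj
    have hj' : j ≤ F.len := by omega
    have h1 : (∑ i ∈ Finset.Ico j (F.len+1),
        (-1 : ℤ) ^ (i - j) * ((xd F E i j : ℤ) - DI F E (j+1) i - DI F E j i))
        = chB F E j - phB F E j - psB F E j := by
      rw [chB, phB, psB, ← Finset.sum_sub_distrib, ← Finset.sum_sub_distrib]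
      apply Finset.sum_congr rfl
      intro i _
      ring
    rw [h1, chB_eq F E hF hj', phB_eq F E hj', DI_succ_eq_vd]
    have h2 : (xd F E j j : ℤ) = (vd F E j : ℤ) + (kvd F E j : ℤ) := by
      exact_mod_cast (rank_nullity_V F E j).symm
    rw [h2]
    ring
  rw [Finset.sum_congr rfl step3]
  rw [← Finset.range_eq_Ico, Finset.sum_add_distrib,
    Finset.sum_range_sub (fun j => psB F E j) (F.len+1), psB_zero, psB_top, sub_zero,
    add_zero, Finset.sum_sub_distrib]
  have had : ∀ j ∈ Finset.range (F.len+1),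
      (ad F E j j : ℤ) ≤ ((gd F E j : ℤ) - (gd F E (j+1) : ℤ)) + (kvd F E (j+1) : ℤ) := by
    intro j _
    have := key_estimate F E hF j
    linarith
  have hsum := Finset.sum_le_sum had
  have t1 : ∑ j ∈ Finset.range (F.len+1),
        (((gd F E j : ℤ) - (gd F E (j+1) : ℤ)) + (kvd F E (j+1) : ℤ))
      = ((gd F E 0 : ℤ) - (gd F E (F.len+1) : ℤ))
        + ∑ j ∈ Finset.range (F.len+1), (kvd F E (j+1) : ℤ) := by
    rw [Finset.sum_add_distrib, Finset.sum_range_sub' (fun j => (gd F E j : ℤ))]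
  have a1 : ∑ j ∈ Finset.range (F.len+1+1), (kvd F E j : ℤ)
      = (∑ j ∈ Finset.range (F.len+1), (kvd F E (j+1) : ℤ)) + (kvd F E 0 : ℤ) :=
    Finset.sum_range_succ' _ _
  have a2 : ∑ j ∈ Finset.range (F.len+1+1), (kvd F E j : ℤ)
      = (∑ j ∈ Finset.range (F.len+1), (kvd F E j : ℤ)) + (kvd F E (F.len+1) : ℤ) :=
    Finset.sum_range_succ _ _
  have hg0 : (gd F E 0 : ℤ) ≤ (kvd F E 0 : ℤ) := by exact_mod_cast gd_le_kvd F E 0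
  have hgt : (gd F E (F.len+1) : ℤ) = 0 := by exact_mod_cast gd_top F E
  have hkt : (kvd F E (F.len+1) : ℤ) = 0 := by exact_mod_cast kvd_top F E
  linarith

end
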